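/- Let n, δ ∈ ℕ and let G be an n-vertex finite simple graph in which every vertex v satisfies δ ≤ d(v) ≤ n − δ − 1. If 3n ≥ (δ+1)(δ+2), then for every integer t ≥ 3, i_t(G) ≤ C(n−δ, t). -/

import Mathlib

open Finset

/-- `numIndep G t` is the number of independent sets of size `t` in `G`, i.e. the number of
`t`-element subsets of the vertex set containing no edge. -/
def numIndep {V : Type*} (G : SimpleGraph V) [Fintype V] [DecidableEq V] [DecidableRel G.Adj]
    (t : ℕ) : ℕ :=
  (((univ : Finset V).powersetCard t).filter fun s => ∀ u ∈ s, ∀ v ∈ s, ¬ G.Adj u v).card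

-- choose identities in ℤ
lemma two_mul_choose_two (k : ℕ) : 2 * (k.choose 2 : ℤ) = k * (k - 1) := by
  induction k with
  | zero => simp
  | succ m ih =>
    rw [Nat.choose_succ_succ]
    push_cast
    push_cast at ih
    have : (m.choose 1 : ℤ) = m := by exact_mod_cast Nat.choose_one_right m
    linarith [ih, this]
    
lemma six_mul_choose_three (m : ℕ) : 6 * (m.choose 3 : ℤ) = m * (m - 1) * (m - 2) := by
  induction m with
  | zero => simp
  | succ k ih =>
    rw [Nat.choose_succ_succ]
    push_cast
    have h2 := two_mul_choose_two k
    push_cast at ih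
    ring_nf
    ring_nf at ih h2
    linarith [ih, h2]

-- counting lemma
lemma count_aux {V : Type*} [Fintype V] [DecidableEq V] (F : Finset (Finset V)) (t k : ℕ)
    (hF : ∀ S ∈ F, S.card = t) :
    F.card * t.choose k =
      ∑ T ∈ (univ : Finset V).powersetCard k, (F.filter (fun S => T ⊆ S)).card := by
  have h1 : ∀ S ∈ F, (((univ : Finset V).powersetCard k).filter (fun T => T ⊆ S)).card
      = t.choose k := by
    intro S hS
    have : ((univ : Finset V).powersetCard k).filter (fun T => T ⊆ S) = S.powersetCard k := by
      ext T
      simp only [mem_filter, mem_powersetCard, subset_univ, true_and]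
      tauto
    rw [this, card_powersetCard, hF S hS]
  symm
  calc ∑ T ∈ (univ : Finset V).powersetCard k, (F.filter (fun S => T ⊆ S)).card
      = ∑ T ∈ (univ : Finset V).powersetCard k, ∑ S ∈ F, if T ⊆ S then 1 else 0 := by
        simp only [Finset.card_filter]
    _ = ∑ S ∈ F, ∑ T ∈ (univ : Finset V).powersetCard k, if T ⊆ S then 1 else 0 :=
        Finset.sum_comm
    _ = ∑ S ∈ F, (((univ : Finset V).powersetCard k).filter (fun T => T ⊆ S)).card := by
        simp only [Finset.card_filter]
    _ = ∑ S ∈ F, t.choose k := Finset.sum_congr rfl h1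
    _ = F.card * t.choose k := by rw [Finset.sum_const, smul_eq_mul]


lemma ext_bound {V : Type*} [Fintype V] [DecidableEq V] (G : SimpleGraph V)
    [DecidableRel G.Adj] (t : ℕ) (T : Finset V) :
    (((((univ : Finset V).powersetCard t).filter
        (fun s => ∀ u ∈ s, ∀ v ∈ s, ¬ G.Adj u v)).filter (fun S => T ⊆ S)).card)
      ≤ ((univ \ (T ∪ T.biUnion (fun z => G.neighborFinset z))).card).choose (t - T.card) := by
  set B := T ∪ T.biUnion (fun z => G.neighborFinset z) with hB
  rw [← card_powersetCard (t - T.card) (univ \ B)]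
  apply Finset.card_le_card_of_injOn (fun S => S \ T)
  · intro S hS
    simp only [mem_coe, mem_filter, mem_powersetCard, subset_univ, true_and] at hS
    obtain ⟨⟨hcard, hind⟩, hTS⟩ := hS
    rw [mem_coe, mem_powersetCard]
    constructor
    · intro z hz
      rw [mem_sdiff] at hz ⊢
      refine ⟨mem_univ _, ?_⟩
      rw [hB, mem_union]
      push_neg
      refine ⟨hz.2, ?_⟩
      intro hzb
      rw [mem_biUnion] at hzb
      obtain ⟨x, hxT, hxz⟩ := hzb
      rw [SimpleGraph.mem_neighborFinset] at hxz
      exact hind x (hTS hxT) z hz.1 hxz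
    · rw [card_sdiff_of_subset hTS, hcard]
  · intro S1 h1 S2 h2 heq
    simp only [mem_coe, mem_filter] at h1 h2
    have e1 := Finset.sdiff_union_of_subset h1.2
    have e2 := Finset.sdiff_union_of_subset h2.2
    rw [← e1, ← e2]
    simp only at heq
    rw [heq]


lemma step_three {V : Type*} [Fintype V] [DecidableEq V] (G : SimpleGraph V) [DecidableRel G.Adj]
    (n δ : ℕ) (hn : Fintype.card V = n)
    (hdeg : ∀ v : V, δ ≤ G.degree v ∧ (G.degree v : ℤ) ≤ (n : ℤ) - δ - 1)
    (hcond : (δ + 1) * (δ + 2) ≤ 3 * n) :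
    numIndep G 3 ≤ (n - δ).choose 3 := by
  classical
  -- basic facts
  have hn1 : 1 ≤ n := by
    by_contra h
    have h0 : n = 0 := by omega
    rw [h0] at hcond
    have : 0 < (δ + 1) * (δ + 2) := Nat.mul_pos (by omega) (by omega)
    omega
  have hV : Nonempty V := by
    rw [← Fintype.card_pos_iff, hn]; exact hn1
  obtain ⟨v0⟩ := hV
  have hδn : 2 * δ + 1 ≤ n := by
    have h1 := (hdeg v0).1
    have h2 := (hdeg v0).2
    have : (δ : ℤ) ≤ (n : ℤ) - δ - 1 := le_trans (by exact_mod_cast h1) h2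
    omega
  have hδlt : δ < n := by omega
  -- notation
  set P2 := (univ : Finset V).powersetCard 2 with hP2
  set F3 := (((univ : Finset V).powersetCard 3).filter
      fun s => ∀ u ∈ s, ∀ v ∈ s, ¬ G.Adj u v) with hF3
  set B : Finset V → Finset V := fun T => T ∪ T.biUnion (fun z => G.neighborFinset z) with hBdef
  set D := P2.filter (fun T => ¬ (∀ u ∈ T, ∀ v ∈ T, ¬ G.Adj u v)) with hD
  -- step 1 : 3 * i3 = sum over pairs
  have h1 : numIndep G 3 * 3 = ∑ T ∈ P2, (F3.filter (fun S => T ⊆ S)).card := by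
    have := count_aux F3 3 2 (by
      intro S hS
      rw [hF3, mem_filter, mem_powersetCard] at hS
      exact hS.1.2)
    simpa [numIndep, hF3] using this
  -- step 2 : key ℕ inequality
  have h2 : numIndep G 3 * 3 + ∑ T ∈ D, (univ \ B T).card ≤ ∑ T ∈ P2, (univ \ B T).card := by
    have hsplit := Finset.sum_filter_add_sum_filter_not P2
      (fun T => ∀ u ∈ T, ∀ v ∈ T, ¬ G.Adj u v) (fun T => (univ \ B T).card)
    have hzero : ∀ T ∈ D, (F3.filter (fun S => T ⊆ S)).card = 0 := by
      intro T hT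
      rw [hD, mem_filter] at hT
      rw [Finset.card_eq_zero, Finset.filter_eq_empty_iff]
      intro S hS hTS
      rw [hF3, mem_filter] at hS
      exact hT.2 (fun u hu v hv => hS.2 u (hTS hu) v (hTS hv))
    have hle : ∀ T ∈ P2.filter (fun T => ∀ u ∈ T, ∀ v ∈ T, ¬ G.Adj u v),
        (F3.filter (fun S => T ⊆ S)).card ≤ (univ \ B T).card := by
      intro T hT
      rw [mem_filter, hP2, mem_powersetCard] at hT
      have hb := ext_bound G 3 T
      rw [hT.1.2] at hb
      simpa [hF3, hBdef, Nat.choose_one_right] using hb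
    calc numIndep G 3 * 3 + ∑ T ∈ D, (univ \ B T).card
        = (∑ T ∈ P2.filter (fun T => ∀ u ∈ T, ∀ v ∈ T, ¬ G.Adj u v),
            (F3.filter (fun S => T ⊆ S)).card)
          + ∑ T ∈ D, (univ \ B T).card := by
          rw [h1, ← Finset.sum_filter_add_sum_filter_not P2
            (fun T => ∀ u ∈ T, ∀ v ∈ T, ¬ G.Adj u v) (fun T => (F3.filter (fun S => T ⊆ S)).card)]
          rw [hD]
          rw [Finset.sum_congr rfl hzero]
          simp
      _ ≤ (∑ T ∈ P2.filter (fun T => ∀ u ∈ T, ∀ v ∈ T, ¬ G.Adj u v), (univ \ B T).card)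
          + ∑ T ∈ D, (univ \ B T).card := by
          exact Nat.add_le_add_right (Finset.sum_le_sum hle) _
      _ = ∑ T ∈ P2, (univ \ B T).card := by rw [hD]; exact hsplit
  -- step 3 : double count over pairs
  have h3 : ∑ T ∈ P2, (univ \ B T).card
      = ∑ v ∈ (univ : Finset V),
          ((univ \ insert v (G.neighborFinset v)).card).choose 2 := by
    have hterm : ∀ T : Finset V, (univ \ B T).card
        = ∑ v ∈ (univ : Finset V), if v ∉ B T then 1 else 0 := by
      intro T
      rw [Finset.sdiff_eq_filter]
      simp only [Finset.card_filter]
    have hfil : ∀ v : V, P2.filter (fun T => v ∉ B T)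
        = (univ \ insert v (G.neighborFinset v)).powersetCard 2 := by
      intro v
      ext T
      simp only [mem_filter, hP2, mem_powersetCard, subset_univ, true_and, hBdef,
        mem_union, mem_biUnion, SimpleGraph.mem_neighborFinset, not_or, not_exists]
      constructor
      · rintro ⟨hcard, hvT, hadj⟩
        refine ⟨fun z hz => ?_, hcard⟩
        rw [mem_sdiff, mem_insert]
        push_neg
        refine ⟨mem_univ _, ?_, ?_⟩
        · rintro rfl; exact hvT hz
        · rw [SimpleGraph.mem_neighborFinset]
          intro hvz
          exact hadj z ⟨hz, G.adj_symm hvz⟩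
      · rintro ⟨hsub, hcard⟩
        refine ⟨hcard, fun hvT => ?_, fun z hzc => ?_⟩
        · have := hsub hvT
          rw [mem_sdiff, mem_insert] at this
          exact this.2 (Or.inl rfl)
        · have := hsub hzc.1
          rw [mem_sdiff, mem_insert, SimpleGraph.mem_neighborFinset] at this
          exact this.2 (Or.inr (G.adj_symm hzc.2))
    calc ∑ T ∈ P2, (univ \ B T).card
        = ∑ T ∈ P2, ∑ v ∈ (univ : Finset V), if v ∉ B T then 1 else 0 :=
          Finset.sum_congr rfl (fun T _ => hterm T)
      _ = ∑ v ∈ (univ : Finset V), ∑ T ∈ P2, if v ∉ B T then 1 else 0 := Finset.sum_comm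
      _ = ∑ v ∈ (univ : Finset V), (P2.filter (fun T => v ∉ B T)).card := by
          simp only [Finset.card_filter]
      _ = ∑ v ∈ (univ : Finset V),
            ((univ \ insert v (G.neighborFinset v)).card).choose 2 := by
          refine Finset.sum_congr rfl (fun v _ => ?_)
          rw [hfil v, card_powersetCard]
  -- step 4 : cardinality of non-closed-neighborhood
  have h4 : ∀ v : V, ((univ \ insert v (G.neighborFinset v)).card : ℤ)
      = (n : ℤ) - G.degree v - 1 := by
    intro v
    have hins : (insert v (G.neighborFinset v)).card = G.degree v + 1 := by
      rw [Finset.card_insert_of_notMem (SimpleGraph.notMem_neighborFinset_self G v),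
        G.card_neighborFinset_eq_degree]
    have hle : (insert v (G.neighborFinset v)).card ≤ n := by
      rw [← hn, ← Finset.card_univ]
      exact Finset.card_le_card (subset_univ _)
    rw [Finset.card_sdiff_of_subset (subset_univ _), Finset.card_univ, hn, hins]
    rw [hins] at hle
    push_cast [Nat.cast_sub hle]
    ring
  -- step 5a : pairs in D containing z
  have h5a : ∀ z : V, (D.filter (fun T => z ∈ T)).card = G.degree z := by
    intro z
    rw [← G.card_neighborFinset_eq_degree]
    symm
    apply Finset.card_bij (fun w _ => insert z ({w} : Finset V))
    · intro w hw
      rw [SimpleGraph.mem_neighborFinset] at hw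
      have hwz : w ≠ z := fun h => (G.ne_of_adj hw) h.symm
      rw [mem_filter, hD, mem_filter, hP2, mem_powersetCard]
      refine ⟨⟨⟨subset_univ _, ?_⟩, ?_⟩, mem_insert_self _ _⟩
      · rw [Finset.card_insert_of_notMem (by simp [hwz.symm]), Finset.card_singleton]
      · push_neg
        exact ⟨z, mem_insert_self _ _, w, mem_insert_of_mem (mem_singleton_self _), hw⟩
    · intro w1 hw1 w2 hw2 heq
      have : w1 ∈ insert z ({w2} : Finset V) := by
        rw [← heq]; exact mem_insert_of_mem (mem_singleton_self _)
      rw [SimpleGraph.mem_neighborFinset] at hw1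
      rcases mem_insert.mp this with h | h
      · exact absurd h.symm (G.ne_of_adj hw1)
      · exact mem_singleton.mp h
    · intro T hT
      rw [mem_filter, hD, mem_filter, hP2, mem_powersetCard] at hT
      obtain ⟨⟨⟨-, hcard⟩, hdep⟩, hzT⟩ := hT
      push_neg at hdep
      obtain ⟨x, hx, y, hy, hadj⟩ := hdep
      have hxy : x ≠ y := G.ne_of_adj hadj
      have hsub : ({x, y} : Finset V) ⊆ T := by
        intro a ha
        rcases mem_insert.mp ha with h | h
        · rwa [h]
        · rw [mem_singleton.mp h]; exact hy
      have hTxy : T = ({x, y} : Finset V) :=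
        (Finset.eq_of_subset_of_card_le hsub (by rw [hcard, Finset.card_pair hxy])).symm
      rw [hTxy] at hzT
      rcases mem_insert.mp hzT with h | h
      · refine ⟨y, ?_, ?_⟩
        · rw [SimpleGraph.mem_neighborFinset, h]; exact hadj
        · rw [hTxy, h]
      · rw [mem_singleton] at h
        refine ⟨x, ?_, ?_⟩
        · rw [SimpleGraph.mem_neighborFinset, h]; exact G.adj_symm hadj
        · rw [hTxy, h, Finset.pair_comm]
  -- step 5b : swapping sums over D
  have h5b : ∀ f : V → ℤ, ∑ T ∈ D, ∑ z ∈ T, f z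
      = ∑ z ∈ (univ : Finset V), ((D.filter (fun T => z ∈ T)).card : ℤ) * f z := by
    intro f
    calc ∑ T ∈ D, ∑ z ∈ T, f z
        = ∑ T ∈ D, ∑ z ∈ (univ : Finset V), if z ∈ T then f z else 0 := by
          refine Finset.sum_congr rfl (fun T _ => ?_)
          rw [Finset.sum_ite_mem, Finset.univ_inter]
      _ = ∑ z ∈ (univ : Finset V), ∑ T ∈ D, if z ∈ T then f z else 0 := Finset.sum_comm
      _ = ∑ z ∈ (univ : Finset V), ((D.filter (fun T => z ∈ T)).card : ℤ) * f z := by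
          refine Finset.sum_congr rfl (fun z _ => ?_)
          rw [← Finset.sum_filter, Finset.sum_const, nsmul_eq_mul]
  -- step 5c : lower bound for terms over D
  have h5c : ∀ T ∈ D, (n : ℤ) - ∑ z ∈ T, (G.degree z : ℤ) ≤ ((univ \ B T).card : ℤ) := by
    intro T hT
    rw [hD, mem_filter, hP2, mem_powersetCard] at hT
    obtain ⟨⟨-, hcard⟩, hdep⟩ := hT
    push_neg at hdep
    obtain ⟨x, hx, y, hy, hadj⟩ := hdep
    have hxy : x ≠ y := G.ne_of_adj hadj
    have hsub : ({x, y} : Finset V) ⊆ T := by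
      intro a ha
      rcases mem_insert.mp ha with h | h
      · rwa [h]
      · rw [mem_singleton.mp h]; exact hy
    have hTxy : T = ({x, y} : Finset V) :=
      (Finset.eq_of_subset_of_card_le hsub (by rw [hcard, Finset.card_pair hxy])).symm
    have hTbi : T ⊆ T.biUnion (fun z => G.neighborFinset z) := by
      intro a ha
      rw [mem_biUnion]
      rw [hTxy] at ha
      rcases mem_insert.mp ha with h | h
      · exact ⟨y, hy, by rw [SimpleGraph.mem_neighborFinset, h]; exact G.adj_symm hadj⟩
      · rw [mem_singleton] at h
        exact ⟨x, hx, by rw [SimpleGraph.mem_neighborFinset, h]; exact hadj⟩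
    have hBeq : B T = T.biUnion (fun z => G.neighborFinset z) := by
      rw [hBdef]
      exact Finset.union_eq_right.mpr hTbi
    have hBcard : (B T).card ≤ ∑ z ∈ T, G.degree z := by
      rw [hBeq]
      refine le_trans (Finset.card_biUnion_le) ?_
      refine Finset.sum_le_sum (fun z _ => ?_)
      rw [G.card_neighborFinset_eq_degree]
    have hBn : (B T).card ≤ n := by
      rw [← hn, ← Finset.card_univ]
      exact Finset.card_le_card (subset_univ _)
    have hcd : ((univ \ B T).card : ℤ) = (n : ℤ) - (B T).card := by
      rw [Finset.card_sdiff_of_subset (subset_univ _), Finset.card_univ, hn]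
      push_cast [Nat.cast_sub hBn]
      ring
    rw [hcd]
    have : ((B T).card : ℤ) ≤ ∑ z ∈ T, (G.degree z : ℤ) := by
      exact_mod_cast hBcard
    linarith
  -- assembly in ℤ
  set i3 := numIndep G 3 with hi3
  set d : V → ℤ := fun v => (G.degree v : ℤ) with hd
  have hA : (i3 : ℤ) * 3 + ∑ T ∈ D, ((univ \ B T).card : ℤ)
      ≤ ∑ v ∈ (univ : Finset V),
          ((((univ \ insert v (G.neighborFinset v)).card).choose 2 : ℕ) : ℤ) := by
    rw [h3] at h2
    exact_mod_cast h2
  have hcard2 : ∀ T ∈ D, T.card = 2 := by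
    intro T hT
    rw [hD, mem_filter, hP2, mem_powersetCard] at hT
    exact hT.1.2
  have hDsum : ∑ T ∈ D, ∑ z ∈ T, d z = ∑ v ∈ (univ : Finset V), d v * d v := by
    rw [h5b d]
    refine Finset.sum_congr rfl (fun v _ => ?_)
    rw [h5a v, hd]
  have hDcN : 2 * D.card = ∑ v ∈ (univ : Finset V), G.degree v := by
    have hswapN : ∑ T ∈ D, T.card
        = ∑ z ∈ (univ : Finset V), (D.filter (fun T => z ∈ T)).card := by
      calc ∑ T ∈ D, T.card
          = ∑ T ∈ D, ∑ z ∈ (univ : Finset V), if z ∈ T then 1 else 0 := by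
            refine Finset.sum_congr rfl (fun T _ => ?_)
            rw [← Finset.card_filter, Finset.filter_univ_mem]
        _ = ∑ z ∈ (univ : Finset V), ∑ T ∈ D, if z ∈ T then 1 else 0 := Finset.sum_comm
        _ = ∑ z ∈ (univ : Finset V), (D.filter (fun T => z ∈ T)).card := by
            simp only [Finset.card_filter]
    have hl : ∑ T ∈ D, T.card = 2 * D.card := by
      rw [Finset.sum_congr rfl hcard2, Finset.sum_const, smul_eq_mul]
      ring
    rw [← hl, hswapN]
    exact Finset.sum_congr rfl (fun v _ => h5a v)
  have hDc : 2 * (D.card : ℤ) = ∑ v ∈ (univ : Finset V), d v := by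
    rw [hd]
    beta_reduce
    exact_mod_cast hDcN
  have hS1 : (D.card : ℤ) * n - ∑ v ∈ (univ : Finset V), d v * d v
      ≤ ∑ T ∈ D, ((univ \ B T).card : ℤ) := by
    have hle := Finset.sum_le_sum h5c
    have heq : ∑ T ∈ D, ((n : ℤ) - ∑ z ∈ T, d z)
        = (D.card : ℤ) * n - ∑ T ∈ D, ∑ z ∈ T, d z := by
      rw [Finset.sum_sub_distrib, Finset.sum_const, nsmul_eq_mul]
    rw [heq, hDsum] at hle
    exact hle
  have h2A : 2 * ∑ v ∈ (univ : Finset V),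
      ((((univ \ insert v (G.neighborFinset v)).card).choose 2 : ℕ) : ℤ)
      = ∑ v ∈ (univ : Finset V), ((n : ℤ) - 1 - d v) * ((n : ℤ) - 2 - d v) := by
    rw [Finset.mul_sum]
    refine Finset.sum_congr rfl (fun v _ => ?_)
    rw [two_mul_choose_two, h4 v]
    ring
  -- pointwise bound
  have hpt : ∀ v ∈ (univ : Finset V),
      ((n : ℤ) - 1 - d v) * ((n : ℤ) - 2 - d v) - (n : ℤ) * d v + 2 * (d v * d v)
      ≤ 3 * (δ : ℤ) ^ 2 - 3 * ((n : ℤ) - 1) * (δ : ℤ) + ((n : ℤ) - 1) * ((n : ℤ) - 2) := by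
    intro v _
    have h1' : (δ : ℤ) ≤ d v := by
      have : (δ : ℤ) ≤ (G.degree v : ℤ) := by exact_mod_cast (hdeg v).1
      exact this
    have h2' : d v ≤ (n : ℤ) - δ - 1 := (hdeg v).2
    nlinarith [mul_nonneg (sub_nonneg.2 h1') (sub_nonneg.2 (by linarith : d v + (δ : ℤ) ≤ (n : ℤ) - 1))]
  have hptsum : ∑ v ∈ (univ : Finset V),
      (((n : ℤ) - 1 - d v) * ((n : ℤ) - 2 - d v) - (n : ℤ) * d v + 2 * (d v * d v))
      ≤ (n : ℤ) * (3 * (δ : ℤ) ^ 2 - 3 * ((n : ℤ) - 1) * (δ : ℤ) + ((n : ℤ) - 1) * ((n : ℤ) - 2)) := by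
    calc ∑ v ∈ (univ : Finset V),
        (((n : ℤ) - 1 - d v) * ((n : ℤ) - 2 - d v) - (n : ℤ) * d v + 2 * (d v * d v))
        ≤ ∑ _v ∈ (univ : Finset V),
          (3 * (δ : ℤ) ^ 2 - 3 * ((n : ℤ) - 1) * (δ : ℤ) + ((n : ℤ) - 1) * ((n : ℤ) - 2)) :=
          Finset.sum_le_sum hpt
      _ = (n : ℤ) * (3 * (δ : ℤ) ^ 2 - 3 * ((n : ℤ) - 1) * (δ : ℤ) + ((n : ℤ) - 1) * ((n : ℤ) - 2)) := by
          rw [Finset.sum_const, Finset.card_univ, hn, nsmul_eq_mul]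
  have hfin : (n : ℤ) * (3 * (δ : ℤ) ^ 2 - 3 * ((n : ℤ) - 1) * (δ : ℤ) + ((n : ℤ) - 1) * ((n : ℤ) - 2))
      ≤ ((n : ℤ) - δ) * ((n : ℤ) - δ - 1) * ((n : ℤ) - δ - 2) := by
    have hc : ((δ : ℤ) + 1) * ((δ : ℤ) + 2) ≤ 3 * (n : ℤ) := by exact_mod_cast hcond
    have hδ0 : (0 : ℤ) ≤ (δ : ℤ) := Int.natCast_nonneg δ
    nlinarith [mul_nonneg hδ0 (sub_nonneg.2 hc)]
  have hch : ((n : ℤ) - δ) * ((n : ℤ) - δ - 1) * ((n : ℤ) - δ - 2) = 6 * ((n - δ).choose 3 : ℤ) := by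
    rw [six_mul_choose_three (n - δ)]
    push_cast [Nat.cast_sub hδlt.le]
    ring
  -- split the big sum
  have hsplit2 : ∑ v ∈ (univ : Finset V),
      (((n : ℤ) - 1 - d v) * ((n : ℤ) - 2 - d v) - (n : ℤ) * d v + 2 * (d v * d v))
      = ∑ v ∈ (univ : Finset V), ((n : ℤ) - 1 - d v) * ((n : ℤ) - 2 - d v)
        - (n : ℤ) * (∑ v ∈ (univ : Finset V), d v)
        + 2 * ∑ v ∈ (univ : Finset V), d v * d v := by
    rw [Finset.sum_add_distrib, Finset.sum_sub_distrib, ← Finset.mul_sum, ← Finset.mul_sum]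
  have hDcn : (2 * (D.card : ℤ)) * (n : ℤ) = (∑ v ∈ (univ : Finset V), d v) * (n : ℤ) := by
    rw [hDc]
  have hfinal : 6 * (i3 : ℤ) ≤ 6 * ((n - δ).choose 3 : ℤ) := by
    rw [← hch]
    linarith [hA, hS1, h2A, hDcn, hsplit2, hptsum, hfin]
  have : (i3 : ℤ) ≤ ((n - δ).choose 3 : ℤ) := by linarith
  exact_mod_cast this


/-- Let `n, δ ∈ ℕ` and let `G` be an `n`-vertex finite simple graph in which every vertex
`v` satisfies `δ ≤ d(v) ≤ n − δ − 1`.  If `3n ≥ (δ+1)(δ+2)`, then for every integer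
`t ≥ 3`, `i_t(G) ≤ C(n−δ, t)`. -/
theorem stmt_9 {V : Type*} [Fintype V] [DecidableEq V] (G : SimpleGraph V) [DecidableRel G.Adj]
    (n δ : ℕ) (hn : Fintype.card V = n)
    (hdeg : ∀ v : V, δ ≤ G.degree v ∧ (G.degree v : ℤ) ≤ (n : ℤ) - δ - 1)
    (hcond : (δ + 1) * (δ + 2) ≤ 3 * n) (t : ℕ) (ht : 3 ≤ t) :
    numIndep G t ≤ (n - δ).choose t := by
  classical
  set Ft := (((univ : Finset V).powersetCard t).filter
      fun s => ∀ u ∈ s, ∀ v ∈ s, ¬ G.Adj u v) with hFt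
  set F3 := (((univ : Finset V).powersetCard 3).filter
      fun s => ∀ u ∈ s, ∀ v ∈ s, ¬ G.Adj u v) with hF3
  have hcA : numIndep G t * t.choose 3
      = ∑ T ∈ (univ : Finset V).powersetCard 3, (Ft.filter (fun S => T ⊆ S)).card := by
    have := count_aux Ft t 3 (by
      intro S hS
      rw [hFt, mem_filter, mem_powersetCard] at hS
      exact hS.1.2)
    simpa [numIndep, hFt] using this
  have hzero : ∀ T ∈ (univ : Finset V).powersetCard 3, T ∉ F3 →
      (Ft.filter (fun S => T ⊆ S)).card = 0 := by
    intro T hT hTn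
    rw [Finset.card_eq_zero, Finset.filter_eq_empty_iff]
    intro S hS hTS
    rw [hFt, mem_filter] at hS
    exact hTn (by
      rw [hF3, mem_filter]
      exact ⟨hT, fun u hu v hv => hS.2 u (hTS hu) v (hTS hv)⟩)
  have hrestrict : ∑ T ∈ (univ : Finset V).powersetCard 3, (Ft.filter (fun S => T ⊆ S)).card
      = ∑ T ∈ F3, (Ft.filter (fun S => T ⊆ S)).card := by
    symm
    apply Finset.sum_subset
    · rw [hF3]; exact Finset.filter_subset _ _
    · exact hzero
  have hperT : ∀ T ∈ F3, (Ft.filter (fun S => T ⊆ S)).card ≤ (n - 3 - δ).choose (t - 3) := by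
    intro T hT
    rw [hF3, mem_filter, mem_powersetCard] at hT
    obtain ⟨⟨-, hcard⟩, hind⟩ := hT
    obtain ⟨u, hu⟩ := Finset.card_pos.mp (by rw [hcard]; norm_num)
    have hdisj : Disjoint T (G.neighborFinset u) := by
      rw [Finset.disjoint_left]
      intro z hz hzn
      rw [SimpleGraph.mem_neighborFinset] at hzn
      exact hind u hu z hz hzn
    set B := T ∪ T.biUnion (fun z => G.neighborFinset z) with hB
    have hsubB : T ∪ G.neighborFinset u ⊆ B := by
      apply Finset.union_subset (Finset.subset_union_left)
      exact le_trans (Finset.subset_biUnion_of_mem (fun z => G.neighborFinset z) hu)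
        Finset.subset_union_right
    have hBge : 3 + G.degree u ≤ B.card := by
      have := Finset.card_le_card hsubB
      rwa [Finset.card_union_of_disjoint hdisj, hcard, G.card_neighborFinset_eq_degree] at this
    have hBle : B.card ≤ n := by
      rw [← hn, ← Finset.card_univ]
      exact Finset.card_le_card (subset_univ _)
    have hcardsd : (univ \ B).card ≤ n - 3 - δ := by
      rw [Finset.card_sdiff_of_subset (subset_univ _), Finset.card_univ, hn]
      have := (hdeg u).1
      omega
    have hb := ext_bound G t T
    rw [hcard] at hb
    exact le_trans hb (Nat.choose_le_choose _ hcardsd)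
  have hi3 : numIndep G 3 ≤ (n - δ).choose 3 := step_three G n δ hn hdeg hcond
  have hchain : numIndep G t * t.choose 3 ≤ (n - δ).choose 3 * (n - 3 - δ).choose (t - 3) := by
    calc numIndep G t * t.choose 3
        = ∑ T ∈ F3, (Ft.filter (fun S => T ⊆ S)).card := by rw [hcA, hrestrict]
      _ ≤ ∑ _T ∈ F3, (n - 3 - δ).choose (t - 3) := Finset.sum_le_sum hperT
      _ = numIndep G 3 * (n - 3 - δ).choose (t - 3) := by
          rw [Finset.sum_const, smul_eq_mul]
          rfl
      _ ≤ (n - δ).choose 3 * (n - 3 - δ).choose (t - 3) :=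
          Nat.mul_le_mul_right _ hi3
  have hident : (n - δ).choose 3 * (n - 3 - δ).choose (t - 3)
      = (n - δ).choose t * t.choose 3 := by
    have heq : n - 3 - δ = (n - δ) - 3 := by omega
    rw [heq]
    by_cases hle : t ≤ n - δ
    · exact (Nat.choose_mul (n := n - δ) ht).symm
    · push_neg at hle
      have h1 : (n - δ).choose t = 0 := Nat.choose_eq_zero_of_lt hle
      by_cases h3 : n - δ < 3
      · rw [Nat.choose_eq_zero_of_lt h3, h1]
        ring
      · push_neg at h3
        have : (n - δ) - 3 < t - 3 := by omega
        rw [Nat.choose_eq_zero_of_lt this, h1]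
        ring
  rw [hident] at hchain
  have hpos : 0 < t.choose 3 := Nat.choose_pos ht
  exact Nat.le_of_mul_le_mul_right hchain hpos
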